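/- If X is a non-singular simplicial set and K any simplicial set, then the simplicial mapping set X^K is non-singular. -/

import Mathlib

open CategoryTheory Simplicial Opposite MonoidalCategory Limits

/-- The representing map of a simplex is degreewise injective. -/
def SSet.RepInj (X : SSet.{0}) {n : ℕ} (x : X _⦋n⦌) : Prop :=
  ∀ m : SimplexCategoryᵒᵖ, Function.Injective (((SSet.yonedaEquiv (X := X) (n := ⦋n⦌)).symm x).app m)

/-- The `i`-th vertex `x εᵢ` of a simplex. -/
def SSet.vert (X : SSet.{0}) {n : ℕ} (x : X _⦋n⦌) (i : Fin (n + 1)) : X _⦋0⦌ :=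
  X.map (SimplexCategory.const ⦋0⦌ ⦋n⦌ i).op x

/-- A simplex is degenerate if it is obtained from a simplex of strictly
lower degree by the action of an operator. -/
def SSet.IsDegenerate (X : SSet.{0}) {n : ℕ} (x : X _⦋n⦌) : Prop :=
  ∃ (m : ℕ) (_ : m < n) (α : (⦋n⦌ : SimplexCategory) ⟶ ⦋m⦌) (y : X _⦋m⦌),
    X.map α.op y = x

/-- A simplicial set is non-singular if every non-degenerate simplex has a
degreewise injective representing map. -/
def SSet.NonSingular (X : SSet.{0}) : Prop :=
  ∀ (n : ℕ) (x : X _⦋n⦌), ¬ X.IsDegenerate x → X.RepInj x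


/-- The simplicial mapping set `X^K`, whose `n`-simplices are the simplicial
maps `Δ[n] × K → X`. -/
noncomputable def SSet.sHom (K X : SSet.{0}) : SSet.{0} where
  obj m := SSet.stdSimplex.obj m.unop ⊗ K ⟶ X
  map α := TypeCat.ofHom fun f => (SSet.stdSimplex.map α.unop ▷ K) ≫ f
  map_id m := by
    refine ConcreteCategory.hom_ext _ _ fun f => ?_
    simp
    erw [CategoryTheory.Functor.map_id, MonoidalCategory.id_whiskerRight, Category.id_comp]
  map_comp α β := by
    refine ConcreteCategory.hom_ext _ _ fun f => ?_
    simp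
    erw [CategoryTheory.Functor.map_comp, MonoidalCategory.comp_whiskerRight, Category.assoc]
open SimplexCategory

section Aux

lemma mapmap (X : SSet.{0}) {m' m n : SimplexCategory} (α : m' ⟶ m) (β : m ⟶ n)
    (x : X.obj (op n)) :
    X.map α.op (X.map β.op x) = X.map (α ≫ β).op x := by
  rw [op_comp, FunctorToTypes.map_comp_apply]

lemma vert_map (X : SSet.{0}) {p q : ℕ} (α : (⦋p⦌ : SimplexCategory) ⟶ ⦋q⦌) (y : X _⦋q⦌)
    (t : Fin (p + 1)) :
    X.vert (X.map α.op y) t = X.vert y (α.toOrderHom t) := by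
  unfold SSet.vert
  rw [mapmap, const_comp]

lemma repInj_iff (X : SSet.{0}) {n : ℕ} (x : X _⦋n⦌) :
    X.RepInj x ↔ ∀ (m : SimplexCategory) (α β : m ⟶ ⦋n⦌),
      X.map α.op x = X.map β.op x → α = β := by
  constructor
  · intro h m α β hh
    have h2 : ((SSet.yonedaEquiv (X := X) (n := ⦋n⦌)).symm x).app (op m)
          (SSet.stdSimplex.objEquiv.symm α)
        = ((SSet.yonedaEquiv (X := X) (n := ⦋n⦌)).symm x).app (op m)
          (SSet.stdSimplex.objEquiv.symm β) := by
      show X.map ((SSet.stdSimplex.objEquiv.{0} (n := ⦋n⦌) (m := op m))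
          ((SSet.stdSimplex.objEquiv.{0} (n := ⦋n⦌) (m := op m)).symm α)).op x
        = X.map ((SSet.stdSimplex.objEquiv.{0} (n := ⦋n⦌) (m := op m))
          ((SSet.stdSimplex.objEquiv.{0} (n := ⦋n⦌) (m := op m)).symm β)).op x
      simpa using hh
    have := h (op m) h2
    simpa using congrArg SSet.stdSimplex.objEquiv this
  · intro h m
    intro s t hst
    have : SSet.stdSimplex.objEquiv s = SSet.stdSimplex.objEquiv t :=
      h m.unop _ _ hst
    simpa using congrArg (SSet.stdSimplex.objEquiv.{0} (n := ⦋n⦌) (m := m)).symm this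

lemma vert_inj_of_repInj (X : SSet.{0}) {n : ℕ} (x : X _⦋n⦌) (h : X.RepInj x) :
    Function.Injective (X.vert x) := by
  intro a b hab
  have := (repInj_iff X x).1 h ⦋0⦌ (const ⦋0⦌ ⦋n⦌ a) (const ⦋0⦌ ⦋n⦌ b) hab
  exact congrArg (fun g => g.toOrderHom 0) this

lemma repInj_of_vert_inj (X : SSet.{0}) {n : ℕ} (x : X _⦋n⦌)
    (h : Function.Injective (X.vert x)) : X.RepInj x := by
  rw [repInj_iff]
  intro m α β hab
  apply SimplexCategory.Hom.ext
  ext t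
  have h2 := congrArg (X.map (const ⦋0⦌ m t).op) hab
  rw [mapmap, mapmap, const_comp, const_comp] at h2
  exact congrArg Fin.val (h h2)

lemma lemF (X : SSet.{0}) (hX : X.NonSingular) :
    ∀ (q : ℕ) (x : X _⦋q⦌) (p : ℕ) (u v : (⦋p⦌ : SimplexCategory) ⟶ ⦋q⦌),
      (∀ t, X.vert x (u.toOrderHom t) = X.vert x (v.toOrderHom t)) →
      X.map u.op x = X.map v.op x := by
  intro q
  induction q using Nat.strong_induction_on with
  | _ q ih =>
    intro x p u v h
    by_cases hd : X.IsDegenerate x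
    · obtain ⟨m, hm, α, y, rfl⟩ := hd
      rw [mapmap, mapmap]
      refine ih m hm y p (u ≫ α) (v ≫ α) ?_
      intro t
      have := h t
      rw [vert_map, vert_map] at this
      simpa using this
    · have hvi := vert_inj_of_repInj X x (hX q x hd)
      have : u = v := by
        apply SimplexCategory.Hom.ext
        ext t
        exact congrArg Fin.val (hvi (h t))
      rw [this]

lemma lemA (X : SSet.{0}) (hX : X.NonSingular) :
    ∀ (q : ℕ) (x : X _⦋q⦌) (a b c : Fin (q + 1)), a ≤ b → b ≤ c →
      X.vert x a = X.vert x c → X.vert x a = X.vert x b := by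
  intro q
  induction q using Nat.strong_induction_on with
  | _ q ih =>
    intro x a b c hab hbc hac
    by_cases hd : X.IsDegenerate x
    · obtain ⟨m, hm, α, y, rfl⟩ := hd
      rw [vert_map, vert_map]
      rw [vert_map, vert_map] at hac
      exact ih m hm y _ _ _ (α.toOrderHom.monotone hab) (α.toOrderHom.monotone hbc) hac
    · have hvi := vert_inj_of_repInj X x (hX q x hd)
      have : a = c := hvi hac
      subst this
      have : a = b := le_antisymm hab hbc
      rw [this]

variable (K X : SSet.{0}) {n : ℕ} (f : SSet.stdSimplex.obj ⦋n⦌ ⊗ K ⟶ X)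

/-- evaluation of a map `Δ⦋n⦌ ⊗ K ⟶ X` -/
def ev (m : SimplexCategory) (η : m ⟶ ⦋n⦌) (k : K.obj (op m)) : X.obj (op m) :=
  f.app (op m) ((SSet.stdSimplex.objEquiv.{0} (n := ⦋n⦌) (m := op m)).symm η, k)

lemma ev_nat {m m' : SimplexCategory} (θ : m' ⟶ m) (η : m ⟶ ⦋n⦌) (k : K.obj (op m)) :
    X.map θ.op (ev K X f m η k) = ev K X f m' (θ ≫ η) (K.map θ.op k) := by
  have h := NatTrans.naturality_apply f θ.op
    (((SSet.stdSimplex.objEquiv.{0} (n := ⦋n⦌) (m := op m)).symm η, k) :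
      (SSet.stdSimplex.obj ⦋n⦌ ⊗ K).obj (op m))
  dsimp at h
  unfold ev
  refine h.symm.trans ?_
  rfl

lemma vert_ev (q : ℕ) (η : (⦋q⦌ : SimplexCategory) ⟶ ⦋n⦌) (k : K.obj (op ⦋q⦌))
    (s : Fin (q + 1)) :
    X.vert (ev K X f ⦋q⦌ η k) s
      = ev K X f ⦋0⦌ (const ⦋0⦌ ⦋n⦌ (η.toOrderHom s)) (K.map (const ⦋0⦌ ⦋q⦌ s).op k) := by
  unfold SSet.vert
  rw [ev_nat, const_comp]

end Aux


/-- collapse `I+1` to `I` : the surjection. -/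
def sig (n' I : ℕ) (hIn : I ≤ n') : (⦋n' + 1⦌ : SimplexCategory) ⟶ ⦋n'⦌ := mkHom
  ⟨fun t => ⟨if (t : ℕ) ≤ I then (t : ℕ) else (t : ℕ) - 1,
      by have := t.isLt; have h9 : (⦋n' + 1⦌ : SimplexCategory).len = n' + 1 := rfl
         split_ifs <;> omega⟩, by
    intro a b hab
    have hab' : (a : ℕ) ≤ (b : ℕ) := hab
    rw [Fin.mk_le_mk]
    split_ifs <;> omega⟩

/-- skip `I+1` : the injection. -/
def del (n' I : ℕ) (hIn : I ≤ n') : (⦋n'⦌ : SimplexCategory) ⟶ ⦋n' + 1⦌ := mkHom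
  ⟨fun s => ⟨if (s : ℕ) ≤ I then (s : ℕ) else (s : ℕ) + 1,
      by have := s.isLt; have h9 : (⦋n'⦌ : SimplexCategory).len = n' := rfl
         split_ifs <;> omega⟩, by
    intro a b hab
    have hab' : (a : ℕ) ≤ (b : ℕ) := hab
    rw [Fin.mk_le_mk]
    split_ifs <;> omega⟩

lemma tauval (n' I : ℕ) (hIn : I ≤ n') (t : Fin (n' + 2)) :
    (((sig n' I hIn ≫ del n' I hIn).toOrderHom t : ℕ))
      = if (t : ℕ) = I + 1 then I else (t : ℕ) := by
  have ht : (t : ℕ) < n' + 2 := t.isLt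
  show (if (if (t : ℕ) ≤ I then (t : ℕ) else (t : ℕ) - 1) ≤ I
      then (if (t : ℕ) ≤ I then (t : ℕ) else (t : ℕ) - 1)
      else (if (t : ℕ) ≤ I then (t : ℕ) else (t : ℕ) - 1) + 1) = _
  split_ifs <;> omega

section StepChain

variable (K X : SSet.{0}) {n' I : ℕ}

set_option maxHeartbeats 2000000 in
lemma stepL (hIn : I ≤ n') (g : SSet.stdSimplex.obj ⦋n' + 1⦌ ⊗ K ⟶ X) (hX : X.NonSingular)
    (H1 : ∀ κ : K.obj (op ⦋0⦌),
      ev K X g ⦋0⦌ (const ⦋0⦌ ⦋n' + 1⦌ ⟨I, by show I < n' + 1 + 1; omega⟩) κ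
        = ev K X g ⦋0⦌ (const ⦋0⦌ ⦋n' + 1⦌ ⟨I + 1, by show I + 1 < n' + 1 + 1; omega⟩) κ)
    (p : ℕ) (η : (⦋p⦌ : SimplexCategory) ⟶ ⦋n' + 1⦌) (k : K.obj (op ⦋p⦌))
    (t₁ : Fin (p + 1)) (h1 : ((η.toOrderHom t₁ : ℕ)) = I + 1)
    (h2 : ∀ t : Fin (p + 1), (t : ℕ) < (t₁ : ℕ) → ((η.toOrderHom t : ℕ)) ≤ I)
    (η' : (⦋p⦌ : SimplexCategory) ⟶ ⦋n' + 1⦌)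
    (hdes : ∀ t, ((η'.toOrderHom t : ℕ)) = if t = t₁ then I else ((η.toOrderHom t : ℕ))) :
    ev K X g ⦋p⦌ η k = ev K X g ⦋p⦌ η' k := by
  have hLp : (⦋p⦌ : SimplexCategory).len = p := rfl
  have hLp1 : (⦋p + 1⦌ : SimplexCategory).len = p + 1 := rfl
  have hLn : (⦋n' + 1⦌ : SimplexCategory).len = n' + 1 := rfl
  set T : ℕ := (t₁ : ℕ) with hT
  have hTp : T ≤ p := by have := t₁.isLt; omega
  -- ℕ-valued version of η
  let e : ℕ → ℕ := fun a => if h : a < p + 1 then ((η.toOrderHom ⟨a, h⟩ : ℕ)) else 0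
  have eη : ∀ t : Fin (p + 1), e (t : ℕ) = ((η.toOrderHom t : ℕ)) := by
    intro t
    show (if h : (t : ℕ) < p + 1 then ((η.toOrderHom ⟨(t : ℕ), h⟩ : ℕ)) else 0) = _
    rw [dif_pos t.isLt]
  have ebd : ∀ a : ℕ, e a ≤ n' + 1 := by
    intro a
    show (if h : a < p + 1 then ((η.toOrderHom ⟨a, h⟩ : ℕ)) else 0) ≤ n' + 1
    split_ifs with h
    · have := (η.toOrderHom ⟨a, h⟩).isLt
      omega
    · omega
  have emono : ∀ a b : ℕ, a ≤ b → b ≤ p → e a ≤ e b := by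
    intro a b hab hbp
    have h3 : ((η.toOrderHom ⟨a, by omega⟩ : ℕ)) ≤ ((η.toOrderHom ⟨b, by omega⟩ : ℕ)) :=
      η.toOrderHom.monotone (by exact hab)
    show (if h : a < p + 1 then _ else 0) ≤ (if h : b < p + 1 then _ else 0)
    rw [dif_pos (by omega : a < p + 1), dif_pos (by omega : b < p + 1)]
    exact h3
  have h1e : e T = I + 1 := by rw [hT, eη]; exact h1
  have h2e : ∀ a : ℕ, a < T → e a ≤ I := by
    intro a ha
    have h4 : e a = ((η.toOrderHom ⟨a, by omega⟩ : ℕ)) := by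
      show (if h : a < p + 1 then _ else 0) = _
      rw [dif_pos (by omega : a < p + 1)]
    rw [h4]
    exact h2 ⟨a, by omega⟩ ha
  -- the auxiliary big simplex operators
  let lam : (⦋p + 1⦌ : SimplexCategory) ⟶ ⦋n' + 1⦌ := mkHom
    ⟨fun s => ⟨if (s : ℕ) < T then e (s : ℕ) else if (s : ℕ) = T then I else e ((s : ℕ) - 1),
        by split_ifs <;> (first | omega | exact Nat.lt_succ_of_le (ebd _))⟩, by
      intro a b hab
      have hab' : (a : ℕ) ≤ (b : ℕ) := hab
      have ha := a.isLt
      have hb := b.isLt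
      rw [Fin.mk_le_mk]
      by_cases c1 : (a : ℕ) < T
      · rw [if_pos c1]
        by_cases c2 : (b : ℕ) < T
        · rw [if_pos c2]
          exact emono _ _ hab' (by omega)
        · rw [if_neg c2]
          by_cases c3 : (b : ℕ) = T
          · rw [if_pos c3]
            have := h2e a c1
            omega
          · rw [if_neg c3]
            calc e (a : ℕ) ≤ e T := emono _ _ (by omega) (by omega)
              _ ≤ e ((b : ℕ) - 1) := emono _ _ (by omega) (by omega)
      · rw [if_neg c1]
        have hbT : ¬ (b : ℕ) < T := by omega
        rw [if_neg hbT]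
        by_cases c3 : (a : ℕ) = T
        · rw [if_pos c3]
          by_cases c4 : (b : ℕ) = T
          · rw [if_pos c4]
          · rw [if_neg c4]
            have : e T ≤ e ((b : ℕ) - 1) := emono _ _ (by omega) (by omega)
            omega
        · rw [if_neg c3]
          have hbT2 : ¬ (b : ℕ) = T := by omega
          rw [if_neg hbT2]
          exact emono _ _ (by omega) (by omega)⟩
  let ψ : (⦋p + 1⦌ : SimplexCategory) ⟶ ⦋p⦌ := mkHom
    ⟨fun s => ⟨if (s : ℕ) ≤ T then (s : ℕ) else (s : ℕ) - 1,
        by have := s.isLt; split_ifs <;> omega⟩, by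
      intro a b hab
      have hab' : (a : ℕ) ≤ (b : ℕ) := hab
      rw [Fin.mk_le_mk]
      split_ifs <;> omega⟩
  let θ₁ : (⦋p⦌ : SimplexCategory) ⟶ ⦋p + 1⦌ := mkHom
    ⟨fun t => ⟨if (t : ℕ) ≤ T then (t : ℕ) else (t : ℕ) + 1,
        by have := t.isLt; split_ifs <;> omega⟩, by
      intro a b hab
      have hab' : (a : ℕ) ≤ (b : ℕ) := hab
      rw [Fin.mk_le_mk]
      split_ifs <;> omega⟩
  let θ₂ : (⦋p⦌ : SimplexCategory) ⟶ ⦋p + 1⦌ := mkHom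
    ⟨fun t => ⟨if (t : ℕ) < T then (t : ℕ) else (t : ℕ) + 1,
        by have := t.isLt; split_ifs <;> omega⟩, by
      intro a b hab
      have hab' : (a : ℕ) ≤ (b : ℕ) := hab
      rw [Fin.mk_le_mk]
      split_ifs <;> omega⟩
  have c1 : θ₁ ≫ ψ = 𝟙 (⦋p⦌ : SimplexCategory) := by
    apply SimplexCategory.Hom.ext
    apply OrderHom.ext
    funext t
    apply Fin.ext
    show (if (if (t : ℕ) ≤ T then (t : ℕ) else (t : ℕ) + 1) ≤ T
        then (if (t : ℕ) ≤ T then (t : ℕ) else (t : ℕ) + 1)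
        else (if (t : ℕ) ≤ T then (t : ℕ) else (t : ℕ) + 1) - 1) = (t : ℕ)
    split_ifs <;> omega
  have c2 : θ₂ ≫ ψ = 𝟙 (⦋p⦌ : SimplexCategory) := by
    apply SimplexCategory.Hom.ext
    apply OrderHom.ext
    funext t
    apply Fin.ext
    show (if (if (t : ℕ) < T then (t : ℕ) else (t : ℕ) + 1) ≤ T
        then (if (t : ℕ) < T then (t : ℕ) else (t : ℕ) + 1)
        else (if (t : ℕ) < T then (t : ℕ) else (t : ℕ) + 1) - 1) = (t : ℕ)
    split_ifs <;> omega
  have c3 : θ₂ ≫ lam = η := by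
    apply SimplexCategory.Hom.ext
    apply OrderHom.ext
    funext t
    apply Fin.ext
    show (if (if (t : ℕ) < T then (t : ℕ) else (t : ℕ) + 1) < T
        then e (if (t : ℕ) < T then (t : ℕ) else (t : ℕ) + 1)
        else if (if (t : ℕ) < T then (t : ℕ) else (t : ℕ) + 1) = T then I
        else e ((if (t : ℕ) < T then (t : ℕ) else (t : ℕ) + 1) - 1)) = ((η.toOrderHom t : ℕ))
    rw [← eη t]
    have he1 : e ((t : ℕ) + 1 - 1) = e (t : ℕ) := congrArg e (by omega)
    split_ifs <;> omega
  have c4 : θ₁ ≫ lam = η' := by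
    apply SimplexCategory.Hom.ext
    apply OrderHom.ext
    funext t
    apply Fin.ext
    show (if (if (t : ℕ) ≤ T then (t : ℕ) else (t : ℕ) + 1) < T
        then e (if (t : ℕ) ≤ T then (t : ℕ) else (t : ℕ) + 1)
        else if (if (t : ℕ) ≤ T then (t : ℕ) else (t : ℕ) + 1) = T then I
        else e ((if (t : ℕ) ≤ T then (t : ℕ) else (t : ℕ) + 1) - 1)) = ((η'.toOrderHom t : ℕ))
    rw [hdes t]
    have he1 : e ((t : ℕ) + 1 - 1) = e (t : ℕ) := congrArg e (by omega)
    have heq := eη t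
    by_cases htt : t = t₁
    · rw [if_pos htt]
      have htT : (t : ℕ) = T := by rw [htt]
      split_ifs <;> omega
    · rw [if_neg htt]
      have htT : (t : ℕ) ≠ T := fun hh => htt (Fin.ext hh)
      split_ifs <;> omega
  have e2 : X.map θ₂.op (ev K X g ⦋p + 1⦌ lam (K.map ψ.op k)) = ev K X g ⦋p⦌ η k := by
    rw [ev_nat, c3, mapmap, c2, op_id, FunctorToTypes.map_id_apply]
  have e1 : X.map θ₁.op (ev K X g ⦋p + 1⦌ lam (K.map ψ.op k)) = ev K X g ⦋p⦌ η' k := by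
    rw [ev_nat, c4, mapmap, c1, op_id, FunctorToTypes.map_id_apply]
  rw [← e1, ← e2]
  apply lemF X hX (p + 1) _ p θ₂ θ₁
  intro t
  by_cases ht : (t : ℕ) = T
  · have hθ2 : θ₂.toOrderHom t = ⟨T + 1, by omega⟩ := by
      apply Fin.ext
      show (if (t : ℕ) < T then (t : ℕ) else (t : ℕ) + 1) = T + 1
      split_ifs <;> omega
    have hθ1 : θ₁.toOrderHom t = ⟨T, by omega⟩ := by
      apply Fin.ext
      show (if (t : ℕ) ≤ T then (t : ℕ) else (t : ℕ) + 1) = T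
      split_ifs <;> omega
    have hψc : ∀ (s : Fin (p + 2)), (s : ℕ) = T ∨ (s : ℕ) = T + 1 →
        K.map (const ⦋0⦌ ⦋p + 1⦌ s).op (K.map ψ.op k) = K.map (const ⦋0⦌ ⦋p⦌ t₁).op k := by
      intro s hs
      rw [mapmap, const_comp]
      have h10 : ψ.toOrderHom s = t₁ := by
        apply Fin.ext
        show (if (s : ℕ) ≤ T then (s : ℕ) else (s : ℕ) - 1) = T
        rcases hs with hs | hs <;> split_ifs <;> omega
      rw [h10]
    have hlam2 : lam.toOrderHom ⟨T + 1, by omega⟩ = ⟨I + 1, by show I + 1 < n' + 1 + 1; omega⟩ := by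
      apply Fin.ext
      show (if T + 1 < T then e (T + 1) else if T + 1 = T then I else e (T + 1 - 1)) = I + 1
      have h1e' : e (T + 1 - 1) = I + 1 := by rw [show T + 1 - 1 = T by omega, h1e]
      split_ifs <;> omega
    have hlam1 : lam.toOrderHom ⟨T, by omega⟩ = ⟨I, by show I < n' + 1 + 1; omega⟩ := by
      apply Fin.ext
      show (if T < T then e T else if T = T then I else e (T - 1)) = I
      split_ifs <;> omega
    have v2 : X.vert (ev K X g ⦋p + 1⦌ lam (K.map ψ.op k)) ⟨T + 1, by omega⟩
        = ev K X g ⦋0⦌ (const ⦋0⦌ ⦋n' + 1⦌ ⟨I + 1, by show I + 1 < n' + 1 + 1; omega⟩)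
          (K.map (const ⦋0⦌ ⦋p⦌ t₁).op k) :=
      (vert_ev K X g (p + 1) lam (K.map ψ.op k) ⟨T + 1, by omega⟩).trans
        (congrArg₂ (fun (a : Fin (n' + 2)) (κ : K.obj (op ⦋0⦌)) =>
            ev K X g ⦋0⦌ (const ⦋0⦌ ⦋n' + 1⦌ a) κ)
          hlam2 (hψc ⟨T + 1, by omega⟩ (Or.inr rfl)))
    have v1 : X.vert (ev K X g ⦋p + 1⦌ lam (K.map ψ.op k)) ⟨T, by omega⟩
        = ev K X g ⦋0⦌ (const ⦋0⦌ ⦋n' + 1⦌ ⟨I, by show I < n' + 1 + 1; omega⟩)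
          (K.map (const ⦋0⦌ ⦋p⦌ t₁).op k) :=
      (vert_ev K X g (p + 1) lam (K.map ψ.op k) ⟨T, by omega⟩).trans
        (congrArg₂ (fun (a : Fin (n' + 2)) (κ : K.obj (op ⦋0⦌)) =>
            ev K X g ⦋0⦌ (const ⦋0⦌ ⦋n' + 1⦌ a) κ)
          hlam1 (hψc ⟨T, by omega⟩ (Or.inl rfl)))
    calc X.vert (ev K X g ⦋p + 1⦌ lam (K.map ψ.op k)) (θ₂.toOrderHom t)
        = X.vert (ev K X g ⦋p + 1⦌ lam (K.map ψ.op k)) ⟨T + 1, by omega⟩ :=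
          congrArg _ hθ2
      _ = ev K X g ⦋0⦌ (const ⦋0⦌ ⦋n' + 1⦌ ⟨I + 1, by show I + 1 < n' + 1 + 1; omega⟩)
          (K.map (const ⦋0⦌ ⦋p⦌ t₁).op k) := v2
      _ = ev K X g ⦋0⦌ (const ⦋0⦌ ⦋n' + 1⦌ ⟨I, by show I < n' + 1 + 1; omega⟩)
          (K.map (const ⦋0⦌ ⦋p⦌ t₁).op k) := (H1 _).symm
      _ = X.vert (ev K X g ⦋p + 1⦌ lam (K.map ψ.op k)) ⟨T, by omega⟩ := v1.symm
      _ = X.vert (ev K X g ⦋p + 1⦌ lam (K.map ψ.op k)) (θ₁.toOrderHom t) :=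
          (congrArg _ hθ1).symm
  · have h11 : θ₂.toOrderHom t = θ₁.toOrderHom t := by
      apply Fin.ext
      show (if (t : ℕ) < T then (t : ℕ) else (t : ℕ) + 1)
        = (if (t : ℕ) ≤ T then (t : ℕ) else (t : ℕ) + 1)
      split_ifs <;> omega
    rw [h11]

set_option maxHeartbeats 1000000 in
lemma chainL (hIn : I ≤ n') (g : SSet.stdSimplex.obj ⦋n' + 1⦌ ⊗ K ⟶ X)
    (hX : X.NonSingular)
    (H1 : ∀ κ : K.obj (op ⦋0⦌),
      ev K X g ⦋0⦌ (const ⦋0⦌ ⦋n' + 1⦌ ⟨I, by show I < n' + 1 + 1; omega⟩) κ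
        = ev K X g ⦋0⦌ (const ⦋0⦌ ⦋n' + 1⦌ ⟨I + 1, by show I + 1 < n' + 1 + 1; omega⟩) κ) :
    ∀ (c p : ℕ) (η : (⦋p⦌ : SimplexCategory) ⟶ ⦋n' + 1⦌) (k : K.obj (op ⦋p⦌)),
      (Finset.univ.filter (fun t => ((η.toOrderHom t : ℕ)) = I + 1)).card ≤ c →
      ev K X g ⦋p⦌ (η ≫ (sig n' I hIn ≫ del n' I hIn)) k = ev K X g ⦋p⦌ η k := by
  have fix : ∀ (p : ℕ) (η : (⦋p⦌ : SimplexCategory) ⟶ ⦋n' + 1⦌),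
      (∀ t : Fin (p + 1), ((η.toOrderHom t : ℕ)) ≠ I + 1) →
      η ≫ (sig n' I hIn ≫ del n' I hIn) = η := by
    intro p η hno
    apply SimplexCategory.Hom.ext
    apply OrderHom.ext
    funext t
    apply Fin.ext
    show (((sig n' I hIn ≫ del n' I hIn).toOrderHom (η.toOrderHom t) : ℕ)) = _
    rw [tauval]
    rw [if_neg (hno t)]
  intro c
  induction c with
  | zero =>
    intro p η k hc
    have hno : ∀ t : Fin (p + 1), ((η.toOrderHom t : ℕ)) ≠ I + 1 := by
      intro t ht
      have hmem : t ∈ Finset.univ.filter (fun t => ((η.toOrderHom t : ℕ)) = I + 1) := by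
        simp only [Finset.mem_filter, Finset.mem_univ, true_and]
        exact ht
      have := Finset.card_pos.mpr ⟨t, hmem⟩
      omega
    rw [fix p η hno]
  | succ c ih =>
    intro p η k hc
    by_cases hS : (Finset.univ.filter (fun t : Fin (p + 1) =>
        ((η.toOrderHom t : ℕ)) = I + 1)).Nonempty
    · have hLp : (⦋p⦌ : SimplexCategory).len = p := rfl
      have hLn : (⦋n' + 1⦌ : SimplexCategory).len = n' + 1 := rfl
      set S := Finset.univ.filter (fun t : Fin (p + 1) => ((η.toOrderHom t : ℕ)) = I + 1)
        with hSdef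
      set t₁ := S.min' hS with ht₁
      have h1 : ((η.toOrderHom t₁ : ℕ)) = I + 1 :=
        (Finset.mem_filter.mp (S.min'_mem hS)).2
      have h2 : ∀ t : Fin (p + 1), (t : ℕ) < (t₁ : ℕ) → ((η.toOrderHom t : ℕ)) ≤ I := by
        intro t ht
        have hne : ((η.toOrderHom t : ℕ)) ≠ I + 1 := by
          intro hmem
          have htS : t ∈ S := by
            rw [hSdef]
            simp only [Finset.mem_filter, Finset.mem_univ, true_and]
            exact hmem
          have := S.min'_le t htS
          rw [← ht₁] at this
          have h5 : (t₁ : ℕ) ≤ (t : ℕ) := this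
          omega
        have : ((η.toOrderHom t : ℕ)) ≤ ((η.toOrderHom t₁ : ℕ)) :=
          η.toOrderHom.monotone (le_of_lt (show t < t₁ from ht))
        omega
      let η' : (⦋p⦌ : SimplexCategory) ⟶ ⦋n' + 1⦌ := mkHom
        ⟨fun t => ⟨if t = t₁ then I else ((η.toOrderHom t : ℕ)),
            by split_ifs
               · omega
               · exact (η.toOrderHom t).isLt⟩, by
          intro a b hab
          have hab' : (a : ℕ) ≤ (b : ℕ) := hab
          rw [Fin.mk_le_mk]
          have hmono : ((η.toOrderHom a : ℕ)) ≤ ((η.toOrderHom b : ℕ)) :=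
            η.toOrderHom.monotone hab
          by_cases d1 : a = t₁
          · rw [if_pos d1]
            by_cases d2 : b = t₁
            · rw [if_pos d2]
            · rw [if_neg d2]
              have hb1 : (t₁ : ℕ) < (b : ℕ) := by
                rcases Nat.lt_or_ge (t₁ : ℕ) (b : ℕ) with h | h
                · exact h
                · exfalso
                  apply d2
                  apply Fin.ext
                  subst d1
                  omega
              have h6 : ((η.toOrderHom t₁ : ℕ)) ≤ ((η.toOrderHom b : ℕ)) :=
                η.toOrderHom.monotone (le_of_lt (show t₁ < b from hb1))
              omega
          · rw [if_neg d1]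
            by_cases d2 : b = t₁
            · rw [if_pos d2]
              have ha1 : (a : ℕ) < (t₁ : ℕ) := by
                rcases Nat.lt_or_ge (a : ℕ) (t₁ : ℕ) with h | h
                · exact h
                · exfalso
                  apply d1
                  apply Fin.ext
                  subst d2
                  omega
              have := h2 a ha1
              omega
            · rw [if_neg d2]
              exact hmono⟩
      have hdes : ∀ t, ((η'.toOrderHom t : ℕ))
          = if t = t₁ then I else ((η.toOrderHom t : ℕ)) := fun _ => rfl
      have hstep := stepL K X hIn g hX H1 p η k t₁ h1 h2 η' hdes
      have hcomp : η' ≫ (sig n' I hIn ≫ del n' I hIn) = η ≫ (sig n' I hIn ≫ del n' I hIn) := by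
        apply SimplexCategory.Hom.ext
        apply OrderHom.ext
        funext t
        apply Fin.ext
        show (((sig n' I hIn ≫ del n' I hIn).toOrderHom (η'.toOrderHom t) : ℕ))
          = (((sig n' I hIn ≫ del n' I hIn).toOrderHom (η.toOrderHom t) : ℕ))
        rw [tauval, tauval, hdes t]
        by_cases ht : t = t₁
        · rw [if_pos ht]
          have h1' : ((η.toOrderHom t : ℕ)) = I + 1 := by rw [ht]; exact h1
          split_ifs <;> omega
        · rw [if_neg ht]
      have hcard : (Finset.univ.filter (fun t : Fin (p + 1) =>
          ((η'.toOrderHom t : ℕ)) = I + 1)).card ≤ c := by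
        have hsub : Finset.univ.filter (fun t : Fin (p + 1) =>
            ((η'.toOrderHom t : ℕ)) = I + 1) = S.erase t₁ := by
          ext t
          simp only [Finset.mem_filter, Finset.mem_univ, true_and, Finset.mem_erase, hSdef]
          rw [hdes t]
          constructor
          · intro h
            split_ifs at h with h'
            · omega
            · exact ⟨h', h⟩
          · intro ⟨h', h⟩
            rw [if_neg h']
            exact h
        rw [hsub]
        have h4 := Finset.card_erase_of_mem (S.min'_mem hS)
        rw [← ht₁] at h4
        rw [h4]
        have hcpos : 1 ≤ S.card := Finset.card_pos.mpr hS
        have h5 : S.card ≤ c + 1 := hc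
        omega
      calc ev K X g ⦋p⦌ (η ≫ (sig n' I hIn ≫ del n' I hIn)) k
          = ev K X g ⦋p⦌ (η' ≫ (sig n' I hIn ≫ del n' I hIn)) k := by rw [hcomp]
        _ = ev K X g ⦋p⦌ η' k := ih p η' k hcard
        _ = ev K X g ⦋p⦌ η k := (hstep).symm
    · rw [fix p η (by
        intro t ht
        exact hS ⟨t, by
          simp only [Finset.mem_filter, Finset.mem_univ, true_and]
          exact ht⟩)]

end StepChain

set_option maxHeartbeats 1000000 in
lemma key (X : SSet.{0}) (hX : X.NonSingular) (K : SSet.{0}) {n : ℕ}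
    (f : (SSet.sHom K X) _⦋n⦌) (i j : Fin (n + 1)) (hij : i < j)
    (hv : (SSet.sHom K X).vert f i = (SSet.sHom K X).vert f j) :
    (SSet.sHom K X).IsDegenerate f := by
  have hIJ : (i : ℕ) < (j : ℕ) := hij
  have hJn : (j : ℕ) < n + 1 := j.isLt
  obtain ⟨n', rfl⟩ : ∃ n', n = n' + 1 := ⟨n - 1, by omega⟩
  have hLn : (⦋n' + 1⦌ : SimplexCategory).len = n' + 1 := rfl
  set I : ℕ := (i : ℕ) with hI
  set J : ℕ := (j : ℕ) with hJ
  have hIn : I ≤ n' := by omega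
  -- view f as a map
  let g : SSet.stdSimplex.obj ⦋n' + 1⦌ ⊗ K ⟶ X := f
  -- H0 : the two given vertices agree at level 0
  have H0 : ∀ κ : K.obj (op ⦋0⦌),
      ev K X g ⦋0⦌ (const ⦋0⦌ ⦋n' + 1⦌ i) κ = ev K X g ⦋0⦌ (const ⦋0⦌ ⦋n' + 1⦌ j) κ := by
    intro κ
    exact congrArg (fun (h : SSet.stdSimplex.obj ⦋0⦌ ⊗ K ⟶ X) =>
      h.app (op (⦋0⦌ : SimplexCategory))
        ((SSet.stdSimplex.objEquiv.{0} (n := ⦋0⦌) (m := op (⦋0⦌ : SimplexCategory))).symm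
          (𝟙 (⦋0⦌ : SimplexCategory)), κ)) hv
  have hii : i = ⟨I, by show I < n' + 1 + 1; omega⟩ := Fin.ext rfl
  -- H1 : the vertices i and i+1 agree at level 0
  have H1 : ∀ κ : K.obj (op ⦋0⦌),
      ev K X g ⦋0⦌ (const ⦋0⦌ ⦋n' + 1⦌ ⟨I, by show I < n' + 1 + 1; omega⟩) κ
        = ev K X g ⦋0⦌ (const ⦋0⦌ ⦋n' + 1⦌ ⟨I + 1, by show I + 1 < n' + 1 + 1; omega⟩) κ := by
    intro κ
    let tri : (⦋2⦌ : SimplexCategory) ⟶ ⦋n' + 1⦌ := mkHom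
      ⟨fun s => ⟨if (s : ℕ) = 0 then I else if (s : ℕ) = 1 then I + 1 else J,
          by split_ifs <;> omega⟩, by
        intro a b hab
        have hab' : (a : ℕ) ≤ (b : ℕ) := hab
        rw [Fin.mk_le_mk]
        split_ifs <;> omega⟩
    set x2 := ev K X g ⦋2⦌ tri (K.map (const ⦋2⦌ ⦋0⦌ 0).op κ) with hx2
    have hconst : ∀ s : Fin 3,
        K.map (const ⦋0⦌ ⦋2⦌ s).op (K.map (const ⦋2⦌ ⦋0⦌ 0).op κ) = κ := by
      intro s
      rw [mapmap]
      have h9 : const ⦋0⦌ ⦋2⦌ s ≫ const ⦋2⦌ ⦋0⦌ 0 = 𝟙 (⦋0⦌ : SimplexCategory) := by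
        apply SimplexCategory.Hom.ext
        apply OrderHom.ext
        funext t
        exact Subsingleton.elim (α := Fin 1) _ _
      rw [h9, op_id, FunctorToTypes.map_id_apply]
    have htri : ∀ (s : Fin 3) (a : Fin (n' + 2)), (tri.toOrderHom s : ℕ) = (a : ℕ) →
        X.vert x2 s = ev K X g ⦋0⦌ (const ⦋0⦌ ⦋n' + 1⦌ a) κ := by
      intro s a ha
      rw [hx2, vert_ev, hconst]
      congr 1
      exact congrArg _ (Fin.ext ha)
    have hval : ∀ s : Fin 3, ((tri.toOrderHom s : ℕ))
        = if (s : ℕ) = 0 then I else if (s : ℕ) = 1 then I + 1 else J := fun _ => rfl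
    have h02 : X.vert x2 0 = X.vert x2 2 := by
      rw [htri 0 i (by rw [hval]; simp [hI]), htri 2 j (by rw [hval]; simp [hJ])]
      exact H0 κ
    have h01 := lemA X hX 2 x2 0 1 2 (by decide) (by decide) h02
    rw [htri 0 ⟨I, by show I < n' + 1 + 1; omega⟩ (by rw [hval]; simp),
      htri 1 ⟨I + 1, by show I + 1 < n' + 1 + 1; omega⟩ (by rw [hval]; simp)] at h01
    exact h01
  -- conclude degeneracy
  refine ⟨n', by omega, sig n' I hIn, (SSet.sHom K X).map (del n' I hIn).op f, ?_⟩
  rw [← FunctorToTypes.map_comp_apply, ← op_comp]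
  show (SSet.stdSimplex.map (sig n' I hIn ≫ del n' I hIn) ▷ K) ≫ g = g
  apply SSet.hom_ext
  intro m
  ext z
  obtain ⟨s, k⟩ := z
  show g.app m ((SSet.stdSimplex.map (sig n' I hIn ≫ del n' I hIn)).app m s, k)
    = g.app m (s, k)
  exact chainL K X hIn g hX H1 _ m.unop.len
    ((SSet.stdSimplex.objEquiv.{0} (n := ⦋n' + 1⦌) (m := m)) s) k le_rfl


/-- If `X` is a non-singular simplicial set and `K` any
simplicial set, then the simplicial mapping set `X^K` is non-singular. -/
theorem nonSingular_sHom (X : SSet.{0}) (hX : X.NonSingular) (K : SSet.{0}) :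
    (SSet.sHom K X).NonSingular := by
  intro n f hf
  apply repInj_of_vert_inj
  intro i j hij
  by_contra hne
  rcases lt_or_gt_of_ne hne with h | h
  · exact hf (key X hX K f i j h hij)
  · exact hf (key X hX K f j i h hij.symm)
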